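/- Let G be a group, H a subgroup of G of finite index, and N(H) = ⋂_{g ∈ G} g⁻¹Hg the normal core of H in G. Then G is not icc if and only if either (i) H is not icc, or (ii) there exists g ∈ G \ H with g ≠ 1 of finite order such that g⁻¹kg = k for all k ∈ N(H). -/

import Mathlib

/-- A group is *icc* (with infinite conjugacy classes) if it is nontrivial and the
conjugacy class of every nontrivial element is infinite. -/
def IsICC (G : Type*) [Group G] : Prop :=
  Nontrivial G ∧ ∀ g : G, g ≠ 1 → {h : G | ∃ x : G, x⁻¹ * g * x = h}.Infinite

section aux

variable {G : Type*} [Group G]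

private def cls (g : G) : Set G := {h : G | ∃ x : G, x⁻¹ * g * x = h}

private lemma finite_cls_mul {a b : G} (ha : (cls a).Finite) (hb : (cls b).Finite) :
    (cls (a * b)).Finite := by
  refine (ha.image2 (· * ·) hb).subset ?_
  rintro _ ⟨x, rfl⟩
  exact ⟨x⁻¹ * a * x, ⟨x, rfl⟩, x⁻¹ * b * x, ⟨x, rfl⟩, by group⟩

private lemma finite_cls_inv {a : G} (ha : (cls a).Finite) : (cls a⁻¹).Finite := by
  refine (ha.image Inv.inv).subset ?_
  rintro _ ⟨x, rfl⟩
  exact ⟨x⁻¹ * a * x, ⟨x, rfl⟩, by group⟩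

private lemma finite_cls_conj {a : G} (ha : (cls a).Finite) (x : G) :
    (cls (x⁻¹ * a * x)).Finite := by
  refine ha.subset ?_
  rintro _ ⟨y, rfl⟩
  exact ⟨x * y, by group⟩

private lemma finite_cls_pow {a : G} (ha : (cls a).Finite) (n : ℕ) :
    (cls (a ^ n)).Finite := by
  induction n with
  | zero =>
    refine (Set.finite_singleton (1 : G)).subset ?_
    rintro _ ⟨x, rfl⟩; simp
  | succ n ih => rw [pow_succ]; exact finite_cls_mul ih ha

private lemma not_icc_iff :
    ¬ IsICC G ↔ ¬ Nontrivial G ∨ ∃ g : G, g ≠ 1 ∧ (cls g).Finite := by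
  unfold IsICC
  rw [not_and_or]
  constructor
  · rintro (h | h)
    · exact Or.inl h
    · push_neg at h
      obtain ⟨g, hg, hfin⟩ := h
      exact Or.inr ⟨g, hg, hfin⟩
  · rintro (h | ⟨g, hg, hfin⟩)
    · exact Or.inl h
    · exact Or.inr fun h => (h g hg) hfin

end aux

/-- G is not icc iff H is not icc or some torsion g ∉ H centralizes the normal core of H. -/
theorem stmt_6 {G : Type*} [Group G] (H : Subgroup G) [H.FiniteIndex] :
    ¬ IsICC G ↔
      (¬ IsICC H ∨
        ∃ g : G, g ∉ H ∧ g ≠ 1 ∧ IsOfFinOrder g ∧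
          ∀ k ∈ H.normalCore, g⁻¹ * k * g = k) := by
  rw [not_icc_iff, not_icc_iff]
  constructor
  · rintro (hG | ⟨g, hg1, hgfin⟩)
    · -- G trivial ⇒ H trivial
      left; left
      rintro ⟨⟨a, b, hab⟩⟩
      exact hG ⟨a, b, fun h => hab (Subtype.ext h)⟩
    · by_cases hFC : ∃ h : G, h ∈ H ∧ h ≠ 1 ∧ (cls h).Finite
      · -- some nontrivial element of H has finite class in G ⇒ H is not icc
        obtain ⟨h, hmem, hne, hfin⟩ := hFC
        left; right
        refine ⟨⟨h, hmem⟩, fun e => hne (congrArg Subtype.val e), ?_⟩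
        have hsub : Subtype.val '' (cls (⟨h, hmem⟩ : H)) ⊆ cls h := by
          rintro _ ⟨_, ⟨x, rfl⟩, rfl⟩
          exact ⟨(x : G), rfl⟩
        exact Set.Finite.of_finite_image (hfin.subset hsub) Subtype.val_injective.injOn
      · -- no nontrivial element of H has finite class
        push_neg at hFC
        right
        have hgH : g ∉ H := fun hm => hFC g hm hg1 hgfin
        have hcent : ∀ k ∈ H.normalCore, g⁻¹ * k * g = k := by
          intro k hk
          have hcin : (g⁻¹ * k⁻¹ * g) * k ∈ H.normalCore := by
            refine mul_mem ?_ hk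
            have := (Subgroup.normalCore_normal H).conj_mem k⁻¹ (inv_mem hk) g⁻¹
            simpa using this
          have hcf : (cls ((g⁻¹ * k⁻¹ * g) * k)).Finite := by
            have : (g⁻¹ * k⁻¹ * g) * k = g⁻¹ * (k⁻¹ * g * k) := by group
            rw [this]
            exact finite_cls_mul (finite_cls_inv hgfin) (finite_cls_conj hgfin k)
          have hc1 : (g⁻¹ * k⁻¹ * g) * k = 1 := by
            by_contra hne
            exact hFC _ (H.normalCore_le hcin) hne hcf
          have h5 : k⁻¹ * g * k = g := by
            have : g⁻¹ * (k⁻¹ * g * k) = 1 := by rw [← hc1]; group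
            have := mul_left_cancel (a := g⁻¹) (this.trans (inv_mul_cancel g).symm)
            exact this
          have hcomm : g * k = k * g := by
            nth_rewrite 2 [← h5]
            group
          calc g⁻¹ * k * g = g⁻¹ * (k * g) := by group
            _ = g⁻¹ * (g * k) := by rw [← hcomm]
            _ = k := by group
        refine ⟨g, hgH, hg1, ?_, hcent⟩
        have htor := isOfFinOrder_of_finite (QuotientGroup.mk g : G ⧸ H.normalCore)
        obtain ⟨n, hn, hpow⟩ := isOfFinOrder_iff_pow_eq_one.mp htor
        have hmem : g ^ n ∈ H.normalCore := by
          rw [← QuotientGroup.eq_one_iff]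
          simpa using hpow
        have hgn : g ^ n = 1 := by
          by_contra hne
          exact hFC _ (H.normalCore_le hmem) hne (finite_cls_pow hgfin n)
        exact isOfFinOrder_iff_pow_eq_one.mpr ⟨n, hn, hgn⟩
  · rintro ((hH | ⟨h, hne, hfin⟩) | ⟨g, hgH, hg1, hgord, hgc⟩)
    · -- H trivial as a group ⇒ G finite
      have hbot : H = ⊥ := (H.bot_or_nontrivial).resolve_right hH
      have hidx : (⊥ : Subgroup G).index ≠ 0 := hbot ▸ Subgroup.FiniteIndex.index_ne_zero
      rw [Subgroup.index_bot] at hidx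
      have : Finite G := Nat.finite_of_card_ne_zero hidx
      by_cases hnt : Nontrivial G
      · obtain ⟨g, hg⟩ := exists_ne (1 : G)
        exact Or.inr ⟨g, hg, (cls g).toFinite⟩
      · exact Or.inl hnt
    · -- a nontrivial FC element of H gives a nontrivial FC element of G
      right
      refine ⟨(h : G), fun e => hne (Subtype.ext e), ?_⟩
      have hsub : cls (h : G) ⊆
          ⋃ q : G ⧸ H, (fun y => q.out * y * q.out⁻¹) '' (Subtype.val '' cls h) := by
        rintro _ ⟨x, rfl⟩
        refine Set.mem_iUnion.mpr ⟨QuotientGroup.mk x⁻¹, ?_⟩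
        set c := (QuotientGroup.mk x⁻¹ : G ⧸ H).out with hc
        have ht : c⁻¹ * x⁻¹ ∈ H := by
          have : (QuotientGroup.mk c : G ⧸ H) = QuotientGroup.mk x⁻¹ := by
            rw [hc]; exact QuotientGroup.out_eq' _
          exact (QuotientGroup.eq (s := H)).mp this
        refine ⟨(c⁻¹ * x⁻¹) * (h : G) * (c⁻¹ * x⁻¹)⁻¹, ?_, by group⟩
        refine ⟨(⟨c⁻¹ * x⁻¹, ht⟩ : H) * h * (⟨c⁻¹ * x⁻¹, ht⟩ : H)⁻¹, ⟨(⟨c⁻¹ * x⁻¹, ht⟩ : H)⁻¹, by group⟩, rfl⟩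
      refine (Set.Finite.subset ?_ hsub)
      exact Set.finite_iUnion fun q => ((hfin.image Subtype.val).image _)
    · -- g centralizes the normal core, which has finite index
      right
      refine ⟨g, hg1, ?_⟩
      have hsub : cls g ⊆
          Set.range (fun q : G ⧸ H.normalCore => q.out * g * q.out⁻¹) := by
        rintro _ ⟨x, rfl⟩
        refine ⟨QuotientGroup.mk x⁻¹, ?_⟩
        set c := (QuotientGroup.mk x⁻¹ : G ⧸ H.normalCore).out with hc
        have ht : c⁻¹ * x⁻¹ ∈ H.normalCore := by
          have : (QuotientGroup.mk c : G ⧸ H.normalCore) = QuotientGroup.mk x⁻¹ := by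
            rw [hc]; exact QuotientGroup.out_eq' _
          exact (QuotientGroup.eq (s := H.normalCore)).mp this
        have h3 : g⁻¹ * (c⁻¹ * x⁻¹) * g = c⁻¹ * x⁻¹ := hgc _ ht
        have hcomm : g * (c⁻¹ * x⁻¹) = (c⁻¹ * x⁻¹) * g := by
          nth_rewrite 1 [← h3]
          group
        show c * g * c⁻¹ = x⁻¹ * g * x
        calc c * g * c⁻¹ = c * (g * (c⁻¹ * x⁻¹)) * x := by group
          _ = c * ((c⁻¹ * x⁻¹) * g) * x := by rw [hcomm]
          _ = x⁻¹ * g * x := by group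
      exact (Set.finite_range _).subset hsub
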